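/- For any Blotto data, any positive solution γ* of Equation (2), and any vector x^A ∈ ℝ^n with x^A_i ≥ 0 for all i and Σ_{i=1}^n x^A_i ≤ X_A, one has Σ_{i=1}^n v^A_i · F_{B*_i}(x^A_i) ≤ Σ_{i=1}^n v^A_i · ∫_{[0,∞)} F_{B*_i}(x) dμ_{A*_i}(x). -/

import Mathlib

open Finset MeasureTheory

/-- Normalized battlefield values: `nv w i = w i / ∑_j w j`. -/
noncomputable def nv {n : ℕ} (w : Fin n → ℝ) (i : Fin n) : ℝ := w i / ∑ j, w j

/-- The set `Ω_A(γ) = {i : v^A_i / v^B_i > γ}`. -/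
noncomputable def OmegaA {n : ℕ} (wA wB : Fin n → ℝ) (γ : ℝ) : Finset (Fin n) :=
  Finset.univ.filter fun i => γ < nv wA i / nv wB i

/-- Equation (2). -/
def Eq2 {n : ℕ} (XA XB : ℝ) (wA wB : Fin n → ℝ) (γ : ℝ) : Prop :=
  XB * γ / XA =
    (γ ^ 2 * ∑ i ∈ OmegaA wA wB γ, (nv wB i) ^ 2 / nv wA i
        + ∑ i ∈ (OmegaA wA wB γ)ᶜ, nv wA i) /
    (∑ i ∈ OmegaA wA wB γ, nv wB i
        + (γ ^ 2)⁻¹ * ∑ i ∈ (OmegaA wA wB γ)ᶜ, (nv wA i) ^ 2 / nv wB i)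

/-- The multiplier λ*_A associated with a solution γ of Equation (2). -/
noncomputable def lamA {n : ℕ} (XB : ℝ) (wA wB : Fin n → ℝ) (γ : ℝ) : ℝ :=
  γ ^ 2 / (2 * XB) * ∑ i ∈ OmegaA wA wB γ, (nv wB i) ^ 2 / nv wA i
    + 1 / (2 * XB) * ∑ i ∈ (OmegaA wA wB γ)ᶜ, nv wA i

/-- The multiplier λ*_B associated with a solution γ of Equation (2). -/
noncomputable def lamB {n : ℕ} (XA : ℝ) (wA wB : Fin n → ℝ) (γ : ℝ) : ℝ :=
  1 / (2 * XA) * ∑ i ∈ OmegaA wA wB γ, nv wB i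
    + 1 / (2 * γ ^ 2 * XA) * ∑ i ∈ (OmegaA wA wB γ)ᶜ, (nv wA i) ^ 2 / nv wB i

/-- The uniform-type CDF `F_{A*_i}`. -/
noncomputable def FAstar {n : ℕ} (XA XB : ℝ) (wA wB : Fin n → ℝ) (γ : ℝ) (i : Fin n)
    (x : ℝ) : ℝ :=
  if x < 0 then 0
  else if i ∈ OmegaA wA wB γ then
    min (x * lamB XA wA wB γ / nv wB i) 1
  else
    min (1 - nv wA i * lamB XA wA wB γ / (nv wB i * lamA XB wA wB γ)
          + x * lamB XA wA wB γ / nv wB i) 1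

/-- The uniform-type CDF `F_{B*_i}`. -/
noncomputable def FBstar {n : ℕ} (XA XB : ℝ) (wA wB : Fin n → ℝ) (γ : ℝ) (i : Fin n)
    (x : ℝ) : ℝ :=
  if x < 0 then 0
  else if i ∈ OmegaA wA wB γ then
    min (1 - nv wB i * lamA XB wA wB γ / (nv wA i * lamB XA wA wB γ)
          + x * lamA XB wA wB γ / nv wA i) 1
  else
    min (x * lamA XB wA wB γ / nv wA i) 1

section BlottoHelpers

open Set

lemma blotto_int_uniform (c b : ℝ) (hc : 0 ≤ c) (hb : 0 ≤ b) (f : ℝ → ℝ) (p q : ℝ)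
    (hf : ∀ x ∈ Icc (0:ℝ) b, f x = q + x * p) :
    ∫ x in Ici (0:ℝ), f x ∂(ENNReal.ofReal c • volume.restrict (Icc 0 b))
      = c * (q * b + p * b ^ 2 / 2) := by
  rw [show ((ENNReal.ofReal c • volume.restrict (Icc (0:ℝ) b)).restrict (Ici 0))
      = ENNReal.ofReal c • volume.restrict (Icc (0:ℝ) b) by
    rw [Measure.restrict_smul, Measure.restrict_restrict measurableSet_Ici,
      Set.inter_eq_right.2 (fun x hx => hx.1)]]
  rw [integral_smul_measure, ENNReal.toReal_ofReal hc, smul_eq_mul]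
  congr 1
  rw [setIntegral_congr_fun measurableSet_Icc hf,
    MeasureTheory.integral_Icc_eq_integral_Ioc, ← intervalIntegral.integral_of_le hb,
    intervalIntegral.integral_add intervalIntegrable_const
    (IntervalIntegrable.mul_const intervalIntegral.intervalIntegrable_id p)]
  simp [intervalIntegral.integral_mul_const, integral_id]
  ring

lemma blotto_int_dirac (c : ℝ) (hc : 0 ≤ c) (f : ℝ → ℝ) :
    ∫ x in Ici (0:ℝ), f x ∂(ENNReal.ofReal c • Measure.dirac 0) = c * f 0 := by
  rw [show ((ENNReal.ofReal c • Measure.dirac (0:ℝ)).restrict (Ici 0))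
      = ENNReal.ofReal c • Measure.dirac (0:ℝ) by
    classical
    rw [Measure.restrict_smul, MeasureTheory.restrict_dirac' measurableSet_Ici,
      if_pos Set.self_mem_Ici]]
  rw [integral_smul_measure, ENNReal.toReal_ofReal hc, smul_eq_mul, integral_dirac]

lemma blotto_meas_uniform (vB LB : ℝ) (hvB : 0 < vB) (hLB : 0 < LB) (μ : Measure ℝ)
    [IsProbabilityMeasure μ]
    (hcdf : ∀ x, μ (Iic x) = ENNReal.ofReal (if x < 0 then 0 else min (x * LB / vB) 1)) :
    μ = ENNReal.ofReal (LB / vB) • volume.restrict (Icc 0 (vB / LB)) := by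
  refine Measure.ext_of_Iic μ _ (fun a => ?_)
  rw [hcdf, Measure.smul_apply, Measure.restrict_apply measurableSet_Iic, smul_eq_mul]
  by_cases ha : a < 0
  · have : Iic a ∩ Icc 0 (vB / LB) = ∅ := by
      ext y; simp only [Set.mem_inter_iff, Set.mem_Iic, Set.mem_Icc, Set.mem_empty_iff_false, iff_false]
      rintro ⟨h1, h2, h3⟩; linarith
    rw [if_pos ha, this]; simp
  · push_neg at ha
    have : Iic a ∩ Icc 0 (vB / LB) = Icc 0 (min a (vB / LB)) := by
      ext y; simp only [Set.mem_inter_iff, Set.mem_Iic, Set.mem_Icc, le_min_iff]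
      exact ⟨fun ⟨h1, h2, h3⟩ => ⟨h2, h1, h3⟩, fun ⟨h1, h2, h3⟩ => ⟨h2, h1, h3⟩⟩
    rw [if_neg (not_lt.2 ha), this, Real.volume_Icc,
      ← ENNReal.ofReal_mul (le_of_lt (div_pos hLB hvB))]
    congr 1
    rcases le_total a (vB / LB) with h | h
    · rw [min_eq_left h, min_eq_left ((div_le_one hvB).2 ((le_div_iff₀ hLB).1 h))]; ring
    · rw [min_eq_right h, min_eq_right ((one_le_div hvB).2 ((div_le_iff₀ hLB).1 h))]
      field_simp; ring

lemma blotto_meas_atom (vA vB LA LB : ℝ) (hvA : 0 < vA) (hvB : 0 < vB) (hLA : 0 < LA)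
    (hLB : 0 < LB) (hle : vA * LB ≤ vB * LA) (μ : Measure ℝ) [IsProbabilityMeasure μ]
    (hcdf : ∀ x, μ (Iic x)
      = ENNReal.ofReal (if x < 0 then 0 else min (1 - vA * LB / (vB * LA) + x * LB / vB) 1)) :
    μ = ENNReal.ofReal (1 - vA * LB / (vB * LA)) • Measure.dirac 0
        + ENNReal.ofReal (LB / vB) • volume.restrict (Icc 0 (vA / LA)) := by
  have hα : 0 ≤ 1 - vA * LB / (vB * LA) := by
    rw [sub_nonneg, div_le_one (mul_pos hvB hLA)]; exact hle
  refine Measure.ext_of_Iic μ _ (fun a => ?_)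
  rw [hcdf, Measure.add_apply, Measure.smul_apply, Measure.smul_apply,
    Measure.restrict_apply measurableSet_Iic, Measure.dirac_apply' _ measurableSet_Iic,
    smul_eq_mul, smul_eq_mul]
  by_cases ha : a < 0
  · have h0 : (0:ℝ) ∉ Iic a := by simp; linarith
    have : Iic a ∩ Icc 0 (vA / LA) = ∅ := by
      ext y; simp only [Set.mem_inter_iff, Set.mem_Iic, Set.mem_Icc, Set.mem_empty_iff_false, iff_false]
      rintro ⟨h1, h2, h3⟩; linarith
    rw [if_pos ha, this, indicator_of_notMem h0]; simp
  · push_neg at ha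
    have h0 : (0:ℝ) ∈ Iic a := by simpa using ha
    have hinter : Iic a ∩ Icc 0 (vA / LA) = Icc 0 (min a (vA / LA)) := by
      ext y; simp only [Set.mem_inter_iff, Set.mem_Iic, Set.mem_Icc, le_min_iff]
      exact ⟨fun ⟨h1, h2, h3⟩ => ⟨h2, h1, h3⟩, fun ⟨h1, h2, h3⟩ => ⟨h2, h1, h3⟩⟩
    rw [if_neg (not_lt.2 ha), hinter, indicator_of_mem h0, Real.volume_Icc]
    simp only [Pi.one_apply, mul_one]
    rw [← ENNReal.ofReal_mul (le_of_lt (div_pos hLB hvB)),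
      ← ENNReal.ofReal_add hα (mul_nonneg (div_pos hLB hvB).le
        (by rw [sub_zero]; exact le_min ha (div_pos hvA hLA).le))]
    congr 1
    rcases le_total a (vA / LA) with h | h
    · have h' : a * LA ≤ vA := (le_div_iff₀ hLA).1 h
      have key : 1 - vA * LB / (vB * LA) + a * LB / vB ≤ 1 := by
        rw [add_comm, ← le_sub_iff_add_le, sub_sub_cancel,
          div_le_div_iff₀ hvB (mul_pos hvB hLA)]
        nlinarith [mul_le_mul_of_nonneg_right h' (mul_pos hLB hvB).le]
      rw [min_eq_left h, min_eq_left key]; ring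
    · have h' : vA ≤ a * LA := (div_le_iff₀ hLA).1 h
      have key : 1 ≤ 1 - vA * LB / (vB * LA) + a * LB / vB := by
        rw [add_comm, ← sub_le_iff_le_add, sub_sub_cancel,
          div_le_div_iff₀ (mul_pos hvB hLA) hvB]
        nlinarith [mul_le_mul_of_nonneg_right h' (mul_pos hLB hvB).le]
      rw [min_eq_right h, min_eq_right key]
      field_simp
      ring

lemma blotto_alg1 (a b L g : ℝ) (ha : a ≠ 0) (hb : b ≠ 0) (hL : L ≠ 0) :
    a * (L / b * ((1 - b * (g * L) / (a * L)) * (b / L) + g * L / a * (b / L) ^ 2 / 2))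
      = a - g * b / 2 := by field_simp; ring

lemma blotto_alg2 (a b L g : ℝ) (ha : a ≠ 0) (hb : b ≠ 0) (hL : L ≠ 0) (hg : g ≠ 0) :
    a * ((1 - a * L / (b * (g * L))) * 0
        + L / b * (0 * (a / (g * L)) + g * L / a * (a / (g * L)) ^ 2 / 2))
      = a ^ 2 / (2 * g * b) := by field_simp; ring

end BlottoHelpers

/-- Playing the marginals F_{A*_i} is a best response against F_{B*_i}. -/
theorem stmt5 (n : ℕ) (hn : 1 ≤ n) (XA XB : ℝ) (hXA : 0 < XA) (hXAB : XA ≤ XB)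
    (wA wB : Fin n → ℝ) (hwA : ∀ i, 0 < wA i) (hwB : ∀ i, 0 < wB i)
    (γ : ℝ) (hγ : 0 < γ) (heq : Eq2 XA XB wA wB γ)
    (μA : Fin n → Measure ℝ) (hprob : ∀ i, IsProbabilityMeasure (μA i))
    (hcdf : ∀ i x, μA i (Set.Iic x) = ENNReal.ofReal (FAstar XA XB wA wB γ i x))
    (xA : Fin n → ℝ) (hx : ∀ i, 0 ≤ xA i) (hsum : ∑ i, xA i ≤ XA) :
    ∑ i, nv wA i * FBstar XA XB wA wB γ i (xA i)
      ≤ ∑ i, nv wA i * ∫ x in Set.Ici (0 : ℝ), FBstar XA XB wA wB γ i x ∂(μA i) := by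
  classical
  haveI hne : Nonempty (Fin n) := ⟨⟨0, hn⟩⟩
  have hXB : 0 < XB := lt_of_lt_of_le hXA hXAB
  have hvA : ∀ i, 0 < nv wA i := fun i =>
    div_pos (hwA i) (Finset.sum_pos (fun j _ => hwA j) Finset.univ_nonempty)
  have hvB : ∀ i, 0 < nv wB i := fun i =>
    div_pos (hwB i) (Finset.sum_pos (fun j _ => hwB j) Finset.univ_nonempty)
  -- positivity of λ_B
  have hLB : 0 < lamB XA wA wB γ := by
    have h1 : (0:ℝ) ≤ ∑ i ∈ OmegaA wA wB γ, nv wB i :=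
      Finset.sum_nonneg fun i _ => (hvB i).le
    have h2 : (0:ℝ) ≤ ∑ i ∈ (OmegaA wA wB γ)ᶜ, (nv wA i)^2 / nv wB i :=
      Finset.sum_nonneg fun i _ => (div_pos (pow_pos (hvA i) 2) (hvB i)).le
    unfold lamB
    rcases (OmegaA wA wB γ).eq_empty_or_nonempty with h | h
    · have hc : (OmegaA wA wB γ)ᶜ = Finset.univ := by rw [h, Finset.compl_empty]
      have h3 : 0 < ∑ i ∈ (OmegaA wA wB γ)ᶜ, (nv wA i)^2 / nv wB i := by
        rw [hc]
        exact Finset.sum_pos (fun i _ => div_pos (pow_pos (hvA i) 2) (hvB i))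
          Finset.univ_nonempty
      have c1 : (0:ℝ) ≤ 1/(2*XA) := by positivity
      have c2 : (0:ℝ) < 1/(2*γ^2*XA) := by positivity
      exact add_pos_of_nonneg_of_pos (mul_nonneg c1 h1) (mul_pos c2 h3)
    · have h3 : 0 < ∑ i ∈ OmegaA wA wB γ, nv wB i := Finset.sum_pos (fun i _ => hvB i) h
      have c1 : (0:ℝ) < 1/(2*XA) := by positivity
      have c2 : (0:ℝ) ≤ 1/(2*γ^2*XA) := by positivity
      exact add_pos_of_pos_of_nonneg (mul_pos c1 h3) (mul_nonneg c2 h2)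
  -- the relation λ_A = γ λ_B
  have hrel : lamA XB wA wB γ = γ * lamB XA wA wB γ := by
    have hN : γ^2 * ∑ i ∈ OmegaA wA wB γ, (nv wB i)^2 / nv wA i
        + ∑ i ∈ (OmegaA wA wB γ)ᶜ, nv wA i = 2 * XB * lamA XB wA wB γ := by
      unfold lamA; field_simp
    have hD : ∑ i ∈ OmegaA wA wB γ, nv wB i
        + (γ^2)⁻¹ * ∑ i ∈ (OmegaA wA wB γ)ᶜ, (nv wA i)^2 / nv wB i
        = 2 * XA * lamB XA wA wB γ := by
      unfold lamB; field_simp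
    unfold Eq2 at heq
    rw [hN, hD] at heq
    have hD' : (0:ℝ) < 2 * XA * lamB XA wA wB γ := by positivity
    rw [div_eq_div_iff hXA.ne' hD'.ne'] at heq
    exact mul_left_cancel₀ (show (2:ℝ)*XB*XA ≠ 0 by positivity)
      (by linear_combination -heq)
  have hLA : 0 < lamA XB wA wB γ := hrel ▸ mul_pos hγ hLB
  -- pointwise linear upper bound
  have hpt : ∀ i, nv wA i * FBstar XA XB wA wB γ i (xA i)
      ≤ lamA XB wA wB γ * xA i
        + (if i ∈ OmegaA wA wB γ then nv wA i - γ * nv wB i else 0) := by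
    intro i
    by_cases hi : i ∈ OmegaA wA wB γ
    · rw [if_pos hi]
      have h1 : FBstar XA XB wA wB γ i (xA i)
          ≤ 1 - nv wB i * lamA XB wA wB γ / (nv wA i * lamB XA wA wB γ)
            + xA i * lamA XB wA wB γ / nv wA i := by
        unfold FBstar
        rw [if_neg (not_lt.2 (hx i)), if_pos hi]
        exact min_le_left _ _
      have h2 : nv wA i * (1 - nv wB i * lamA XB wA wB γ / (nv wA i * lamB XA wA wB γ)
            + xA i * lamA XB wA wB γ / nv wA i)
          = lamA XB wA wB γ * xA i + (nv wA i - γ * nv wB i) := by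
        rw [hrel]; field_simp [(hvA i).ne', hLB.ne']; ring
      nlinarith [mul_le_mul_of_nonneg_left h1 (hvA i).le]
    · rw [if_neg hi]
      have h1 : FBstar XA XB wA wB γ i (xA i) ≤ xA i * lamA XB wA wB γ / nv wA i := by
        unfold FBstar
        rw [if_neg (not_lt.2 (hx i)), if_neg hi]
        exact min_le_left _ _
      have h2 : nv wA i * (xA i * lamA XB wA wB γ / nv wA i)
          = lamA XB wA wB γ * xA i + 0 := by
        field_simp [(hvA i).ne']; ring
      nlinarith [mul_le_mul_of_nonneg_left h1 (hvA i).le]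
  -- the exact value of each integral
  have hIi : ∀ i, nv wA i * ∫ x in Set.Ici (0:ℝ), FBstar XA XB wA wB γ i x ∂(μA i)
      = if i ∈ OmegaA wA wB γ then nv wA i - γ * nv wB i / 2
        else (nv wA i)^2 / (2 * γ * nv wB i) := by
    intro i
    haveI := hprob i
    by_cases hi : i ∈ OmegaA wA wB γ
    · rw [if_pos hi]
      have hμ : μA i = ENNReal.ofReal (lamB XA wA wB γ / nv wB i)
          • volume.restrict (Set.Icc 0 (nv wB i / lamB XA wA wB γ)) := by
        apply blotto_meas_uniform (nv wB i) (lamB XA wA wB γ) (hvB i) hLB (μA i)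
        intro x
        rw [hcdf i x]
        congr 1
        unfold FAstar
        by_cases hx0 : x < 0 <;> simp [hx0, hi]
      have hf : ∀ x ∈ Set.Icc (0:ℝ) (nv wB i / lamB XA wA wB γ),
          FBstar XA XB wA wB γ i x
            = (1 - nv wB i * lamA XB wA wB γ / (nv wA i * lamB XA wA wB γ))
              + x * (lamA XB wA wB γ / nv wA i) := by
        intro x hxm
        unfold FBstar
        rw [if_neg (not_lt.2 hxm.1), if_pos hi]
        have hxb : x * lamB XA wA wB γ ≤ nv wB i := (le_div_iff₀ hLB).1 hxm.2
        have key : 1 - nv wB i * lamA XB wA wB γ / (nv wA i * lamB XA wA wB γ)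
            + x * lamA XB wA wB γ / nv wA i ≤ 1 := by
          rw [add_comm, ← le_sub_iff_add_le, sub_sub_cancel,
            div_le_div_iff₀ (hvA i) (mul_pos (hvA i) hLB)]
          nlinarith [mul_le_mul_of_nonneg_right hxb (mul_pos hLA (hvA i)).le]
        rw [min_eq_left key]; ring
      rw [hμ, blotto_int_uniform (lamB XA wA wB γ / nv wB i) (nv wB i / lamB XA wA wB γ)
        (div_pos hLB (hvB i)).le (div_pos (hvB i) hLB).le _ (lamA XB wA wB γ / nv wA i)
        (1 - nv wB i * lamA XB wA wB γ / (nv wA i * lamB XA wA wB γ)) hf]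
      rw [hrel]
      exact blotto_alg1 (nv wA i) (nv wB i) (lamB XA wA wB γ) γ
        (hvA i).ne' (hvB i).ne' hLB.ne'
    · rw [if_neg hi]
      have hle : nv wA i * lamB XA wA wB γ ≤ nv wB i * lamA XB wA wB γ := by
        have hratio : nv wA i / nv wB i ≤ γ := by
          have := hi
          unfold OmegaA at this
          simp only [Finset.mem_filter, Finset.mem_univ, true_and, not_lt] at this
          exact this
        have h' : nv wA i ≤ γ * nv wB i := by
          rw [div_le_iff₀ (hvB i)] at hratio; linarith
        rw [hrel]
        nlinarith [mul_le_mul_of_nonneg_right h' hLB.le]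
      have hμ : μA i
          = ENNReal.ofReal (1 - nv wA i * lamB XA wA wB γ / (nv wB i * lamA XB wA wB γ))
              • Measure.dirac 0
            + ENNReal.ofReal (lamB XA wA wB γ / nv wB i)
              • volume.restrict (Set.Icc 0 (nv wA i / lamA XB wA wB γ)) := by
        apply blotto_meas_atom (nv wA i) (nv wB i) (lamA XB wA wB γ) (lamB XA wA wB γ)
          (hvA i) (hvB i) hLA hLB hle (μA i)
        intro x
        rw [hcdf i x]
        congr 1
        unfold FAstar
        by_cases hx0 : x < 0 <;> simp [hx0, hi]
      have hα : 0 ≤ 1 - nv wA i * lamB XA wA wB γ / (nv wB i * lamA XB wA wB γ) := by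
        rw [sub_nonneg, div_le_one (mul_pos (hvB i) hLA)]; exact hle
      have hmeas : Measurable (FBstar XA XB wA wB γ i) := by
        have hform : FBstar XA XB wA wB γ i
            = fun x => if x < 0 then 0 else min (x * lamA XB wA wB γ / nv wA i) 1 := by
          funext x; unfold FBstar; by_cases hx0 : x < 0 <;> simp [hx0, hi]
        rw [hform]
        exact Measurable.ite (measurableSet_lt measurable_id measurable_const)
          measurable_const (by fun_prop)
      have hbd : ∀ x, ‖FBstar XA XB wA wB γ i x‖ ≤ 1 := by
        intro x
        unfold FBstar
        by_cases hx0 : x < 0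
        · simp [hx0]
        · rw [if_neg hx0, if_neg hi, Real.norm_eq_abs, abs_le]
          refine ⟨?_, min_le_right _ _⟩
          have h0 : (0:ℝ) ≤ x * lamA XB wA wB γ / nv wA i :=
            div_nonneg (mul_nonneg (not_lt.1 hx0) hLA.le) (hvA i).le
          have := le_min h0 (zero_le_one (α := ℝ))
          linarith
      haveI hfin1 : IsFiniteMeasure
          (ENNReal.ofReal (1 - nv wA i * lamB XA wA wB γ / (nv wB i * lamA XB wA wB γ))
            • Measure.dirac (0:ℝ)) := by
        refine ⟨?_⟩
        rw [Measure.smul_apply, smul_eq_mul]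
        exact ENNReal.mul_lt_top ENNReal.ofReal_lt_top (by simp)
      haveI hfin2 : IsFiniteMeasure
          (ENNReal.ofReal (lamB XA wA wB γ / nv wB i)
            • volume.restrict (Set.Icc (0:ℝ) (nv wA i / lamA XB wA wB γ))) := by
        refine ⟨?_⟩
        rw [Measure.smul_apply, smul_eq_mul, Measure.restrict_apply_univ]
        exact ENNReal.mul_lt_top ENNReal.ofReal_lt_top
          (by rw [Real.volume_Icc]; exact ENNReal.ofReal_lt_top)
      have hint1 : Integrable (FBstar XA XB wA wB γ i)
          ((ENNReal.ofReal (1 - nv wA i * lamB XA wA wB γ / (nv wB i * lamA XB wA wB γ))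
            • Measure.dirac (0:ℝ)).restrict (Set.Ici 0)) :=
        Integrable.restrict ⟨hmeas.aestronglyMeasurable,
          HasFiniteIntegral.of_bounded (C := 1) (Filter.Eventually.of_forall hbd)⟩
      have hint2 : Integrable (FBstar XA XB wA wB γ i)
          ((ENNReal.ofReal (lamB XA wA wB γ / nv wB i)
            • volume.restrict (Set.Icc (0:ℝ) (nv wA i / lamA XB wA wB γ))).restrict
            (Set.Ici 0)) :=
        Integrable.restrict ⟨hmeas.aestronglyMeasurable,
          HasFiniteIntegral.of_bounded (C := 1) (Filter.Eventually.of_forall hbd)⟩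
      have hf : ∀ x ∈ Set.Icc (0:ℝ) (nv wA i / lamA XB wA wB γ),
          FBstar XA XB wA wB γ i x = 0 + x * (lamA XB wA wB γ / nv wA i) := by
        intro x hxm
        unfold FBstar
        rw [if_neg (not_lt.2 hxm.1), if_neg hi]
        have hxb : x * lamA XB wA wB γ ≤ nv wA i := (le_div_iff₀ hLA).1 hxm.2
        rw [min_eq_left (by rw [div_le_one (hvA i)]; exact hxb)]
        ring
      have hFB0 : FBstar XA XB wA wB γ i 0 = 0 := by
        unfold FBstar
        rw [if_neg (lt_irrefl 0), if_neg hi]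
        simp
      rw [hμ, Measure.restrict_add, integral_add_measure hint1 hint2,
        blotto_int_dirac _ hα _,
        blotto_int_uniform (lamB XA wA wB γ / nv wB i) (nv wA i / lamA XB wA wB γ)
          (div_pos hLB (hvB i)).le (div_pos (hvA i) hLA).le _ (lamA XB wA wB γ / nv wA i)
          0 hf, hFB0]
      rw [hrel]
      exact blotto_alg2 (nv wA i) (nv wB i) (lamB XA wA wB γ) γ
        (hvA i).ne' (hvB i).ne' hLB.ne' hγ.ne'
  -- the budget bookkeeping
  have e1 : ∀ (f g : Fin n → ℝ), ∑ i, (if i ∈ OmegaA wA wB γ then f i else g i)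
      = ∑ i ∈ OmegaA wA wB γ, f i + ∑ i ∈ (OmegaA wA wB γ)ᶜ, g i := by
    intro f g
    rw [← Finset.sum_add_sum_compl (OmegaA wA wB γ)]
    congr 1
    · exact Finset.sum_congr rfl fun i hi => if_pos hi
    · exact Finset.sum_congr rfl fun i hi => if_neg (Finset.mem_compl.1 hi)
  have hkey : lamA XB wA wB γ * XA
      + ∑ i, (if i ∈ OmegaA wA wB γ then nv wA i - γ * nv wB i else 0)
      = ∑ i, (if i ∈ OmegaA wA wB γ then nv wA i - γ * nv wB i / 2
          else (nv wA i)^2 / (2 * γ * nv wB i)) := by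
    rw [e1, e1]
    have hLAX : lamA XB wA wB γ * XA = γ/2 * ∑ i ∈ OmegaA wA wB γ, nv wB i
        + 1/(2*γ) * ∑ i ∈ (OmegaA wA wB γ)ᶜ, (nv wA i)^2 / nv wB i := by
      rw [hrel]; unfold lamB; field_simp
    have e2 : ∑ i ∈ OmegaA wA wB γ, (nv wA i - γ * nv wB i / 2)
        = ∑ i ∈ OmegaA wA wB γ, (nv wA i - γ * nv wB i)
          + γ/2 * ∑ i ∈ OmegaA wA wB γ, nv wB i := by
      rw [Finset.mul_sum, ← Finset.sum_add_distrib]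
      exact Finset.sum_congr rfl fun i _ => by ring
    have e3 : ∑ i ∈ (OmegaA wA wB γ)ᶜ, (nv wA i)^2 / (2 * γ * nv wB i)
        = 1/(2*γ) * ∑ i ∈ (OmegaA wA wB γ)ᶜ, (nv wA i)^2 / nv wB i := by
      rw [Finset.mul_sum]
      refine Finset.sum_congr rfl fun i _ => ?_
      field_simp
    rw [hLAX, e2, e3, Finset.sum_const_zero]
    ring
  -- put everything together
  calc ∑ i, nv wA i * FBstar XA XB wA wB γ i (xA i)
      ≤ ∑ i, (lamA XB wA wB γ * xA i
          + (if i ∈ OmegaA wA wB γ then nv wA i - γ * nv wB i else 0)) :=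
        Finset.sum_le_sum fun i _ => hpt i
    _ = lamA XB wA wB γ * (∑ i, xA i)
          + ∑ i, (if i ∈ OmegaA wA wB γ then nv wA i - γ * nv wB i else 0) := by
        rw [Finset.sum_add_distrib, Finset.mul_sum]
    _ ≤ lamA XB wA wB γ * XA
          + ∑ i, (if i ∈ OmegaA wA wB γ then nv wA i - γ * nv wB i else 0) := by
        have := mul_le_mul_of_nonneg_left hsum hLA.le
        linarith
    _ = ∑ i, (if i ∈ OmegaA wA wB γ then nv wA i - γ * nv wB i / 2
          else (nv wA i)^2 / (2 * γ * nv wB i)) := hkey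
    _ = ∑ i, nv wA i * ∫ x in Set.Ici (0:ℝ), FBstar XA XB wA wB γ i x ∂(μA i) :=
        Finset.sum_congr rfl fun i _ => (hIi i).symm
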